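/- (Masked chain-rule factorization) In the masked-data model, for any sequence x ∈ A^n with P(X = x) > 0, P(X = x) = ∏_{i=1}^n P( X_i = x_i | Y_k = some x_k for all k < i, and Y_k = none for all k ≥ i ); that is, the joint probability of a sequence factors exactly into the left-to-right masked conditionals in which all positions from i onward are masked. -/
import Mathlib


/-- The joint distribution of `(X, Z)` in the masked-data model: `X ~ P` and the mask
indicators `Z_j` are i.i.d. Bernoulli(q), independent of `X`. -/
noncomputable def maskedJoint {A : Type*} {n : ℕ} (P : (Fin n → A) → ℝ) (q : ℝ) :
    (Fin n → A) × (Fin n → Bool) → ℝ :=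
  fun xz => P xz.1 * ∏ j : Fin n, (if xz.2 j = true then q else 1 - q)

/-- The masked sequence `Y ∈ (Option A)^n`: `Y_j = some X_j` if `Z_j = 0` and
`Y_j = none` (the mask symbol) if `Z_j = 1`. -/
def maskedSeq {A : Type*} {n : ℕ} (xz : (Fin n → A) × (Fin n → Bool)) : Fin n → Option A :=
  fun j => if xz.2 j = true then none else some (xz.1 j)

/-- The probability of an event `E` under a distribution `μ` on a finite sample space. -/
noncomputable def prFin {Ω : Type*} [Fintype Ω] (μ : Ω → ℝ) (E : Set Ω) : ℝ :=
  ∑ ω, E.indicator μ ω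

/-- Auxiliary computation: the probability of an event of the form
`{(w,z) | φ w ∧ z = z₀}` factorizes under `maskedJoint`. -/
lemma maskedJoint_prFin_eq {A : Type*} [Fintype A] {n : ℕ}
    (P : (Fin n → A) → ℝ) (q : ℝ) (i : Fin n) (φ : (Fin n → A) → Prop)
    [DecidablePred φ] (T : Set ((Fin n → A) × (Fin n → Bool)))
    (hT : ∀ w z, ((w, z) ∈ T) ↔ φ w ∧ z = fun k => decide (i ≤ k)) :
    prFin (maskedJoint P q) T =
      (∑ w : Fin n → A, if φ w then P w else 0) *
        ∏ j : Fin n, (if i ≤ j then q else 1 - q) := by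
  classical
  set z0 : Fin n → Bool := fun k => decide (i ≤ k) with hz0
  unfold prFin
  rw [Fintype.sum_prod_type]
  have hstep : ∀ w : Fin n → A,
      (∑ z : Fin n → Bool, T.indicator (maskedJoint P q) (w, z)) =
        if φ w then maskedJoint P q (w, z0) else 0 := by
    intro w
    have h1 : ∀ z : Fin n → Bool, T.indicator (maskedJoint P q) (w, z) =
        if z = z0 then (if φ w then maskedJoint P q (w, z) else 0) else 0 := by
      intro z
      rw [Set.indicator_apply]
      by_cases hz : z = z0
      · by_cases hφ : φ w
        · rw [if_pos ((hT w z).mpr ⟨hφ, hz⟩), if_pos hz, if_pos hφ]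
        · rw [if_neg (fun h => hφ ((hT w z).mp h).1), if_pos hz, if_neg hφ]
      · rw [if_neg (fun h => hz ((hT w z).mp h).2), if_neg hz]
    simp_rw [h1]
    rw [Finset.sum_ite_eq' Finset.univ z0
      (fun z => if φ w then maskedJoint P q (w, z) else 0), if_pos (Finset.mem_univ _)]
  simp_rw [hstep]
  have hμ' : ∀ w, maskedJoint P q (w, z0) =
      P w * ∏ j : Fin n, (if i ≤ j then q else 1 - q) := by
    intro w
    unfold maskedJoint
    congr 1
    refine Finset.prod_congr rfl fun j _ => ?_
    simp [hz0]
  simp_rw [hμ']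
  rw [Finset.sum_mul]
  refine Finset.sum_congr rfl fun w _ => ?_
  rw [ite_mul, zero_mul]

theorem masked_chain_rule
    {A : Type*} [Fintype A] [Nonempty A] {n : ℕ} (hn : 1 ≤ n)
    (P : (Fin n → A) → ℝ) (hP0 : ∀ w, 0 ≤ P w) (hP1 : ∑ w : Fin n → A, P w = 1)
    (q : ℝ) (hq0 : 0 < q) (hq1 : q < 1)
    (x : Fin n → A) (hx : 0 < P x) :
    P x =
      ∏ i : Fin n,
        prFin (maskedJoint P q)
            {xz | xz.1 i = x i ∧ (∀ k, k < i → maskedSeq xz k = some (x k)) ∧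
                  (∀ k, i ≤ k → maskedSeq xz k = none)} /
          prFin (maskedJoint P q)
            {xz | (∀ k, k < i → maskedSeq xz k = some (x k)) ∧
                  (∀ k, i ≤ k → maskedSeq xz k = none)} := by
  classical
  -- the partial sums
  set S : ℕ → ℝ := fun m => ∑ w : Fin n → A,
    if (∀ k : Fin n, (k : ℕ) < m → w k = x k) then P w else 0 with hSdef
  have hSx : ∀ m, P x ≤ S m := by
    intro m
    have h0 : ∀ w ∈ Finset.univ, (0:ℝ) ≤
        if (∀ k : Fin n, (k : ℕ) < m → w k = x k) then P w else 0 := by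
      intro w _
      split
      · exact hP0 w
      · exact le_refl 0
    have := Finset.single_le_sum h0 (Finset.mem_univ x)
    simpa using this
  have hSpos : ∀ m, 0 < S m := fun m => lt_of_lt_of_le hx (hSx m)
  have hSne : ∀ m, S m ≠ 0 := fun m => (hSpos m).ne'
  have hS0 : S 0 = 1 := by
    simp only [hSdef]
    rw [← hP1]
    refine Finset.sum_congr rfl fun w _ => ?_
    rw [if_pos fun k hk => absurd hk (Nat.not_lt_zero _)]
  have hSn : S n = P x := by
    have hiff : ∀ w : Fin n → A, (∀ k : Fin n, (k : ℕ) < n → w k = x k) ↔ w = x :=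
      fun w => ⟨fun h => funext fun k => h k k.isLt, fun h k _ => by rw [h]⟩
    simp only [hSdef]
    simp_rw [hiff]
    rw [Finset.sum_ite_eq' Finset.univ x P, if_pos (Finset.mem_univ x)]
  -- the mask-weight constants
  set C : Fin n → ℝ := fun i => ∏ j : Fin n, (if i ≤ j then q else 1 - q) with hCdef
  have hCpos : ∀ i, 0 < C i := by
    intro i
    refine Finset.prod_pos fun j _ => ?_
    split
    · exact hq0
    · linarith
  -- membership characterizations
  have hmem_d : ∀ (i : Fin n) (w : Fin n → A) (z : Fin n → Bool),
      ((w, z) ∈ {xz : (Fin n → A) × (Fin n → Bool) |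
          (∀ k, k < i → maskedSeq xz k = some (x k)) ∧
          (∀ k, i ≤ k → maskedSeq xz k = none)}) ↔
        ((∀ k, k < i → w k = x k) ∧ z = fun k => decide (i ≤ k)) := by
    intro i w z
    simp only [Set.mem_setOf_eq, maskedSeq]
    constructor
    · rintro ⟨h1, h2⟩
      have hz : z = fun k => decide (i ≤ k) := by
        funext k
        rcases lt_or_ge k i with hk | hk
        · have h := h1 k hk
          have hni : ¬ i ≤ k := not_le.mpr hk
          cases hzk : z k with
          | true => rw [hzk] at h; simp at h
          | false => simp [hni]
        · have h := h2 k hk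
          cases hzk : z k with
          | true => simp [hk]
          | false => rw [hzk] at h; simp at h
      refine ⟨fun k hk => ?_, hz⟩
      have h := h1 k hk
      have hzk : z k = false := by rw [hz]; simp [not_le.mpr hk]
      rw [hzk] at h
      simpa using h
    · rintro ⟨h1, rfl⟩
      constructor
      · intro k hk
        simp [not_le.mpr hk, h1 k hk]
      · intro k hk
        simp [hk]
  have hmem_n : ∀ (i : Fin n) (w : Fin n → A) (z : Fin n → Bool),
      ((w, z) ∈ {xz : (Fin n → A) × (Fin n → Bool) |
          xz.1 i = x i ∧ (∀ k, k < i → maskedSeq xz k = some (x k)) ∧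
          (∀ k, i ≤ k → maskedSeq xz k = none)}) ↔
        ((w i = x i ∧ ∀ k, k < i → w k = x k) ∧ z = fun k => decide (i ≤ k)) := by
    intro i w z
    have h := hmem_d i w z
    simp only [Set.mem_setOf_eq] at h ⊢
    tauto
  -- compute the two probabilities
  have hden : ∀ i : Fin n,
      prFin (maskedJoint P q)
        {xz : (Fin n → A) × (Fin n → Bool) |
          (∀ k, k < i → maskedSeq xz k = some (x k)) ∧
          (∀ k, i ≤ k → maskedSeq xz k = none)} = S (i : ℕ) * C i := by
    intro i
    rw [maskedJoint_prFin_eq P q i (fun w => ∀ k, k < i → w k = x k) _ (hmem_d i)]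
    congr 1
  have hnum : ∀ i : Fin n,
      prFin (maskedJoint P q)
        {xz : (Fin n → A) × (Fin n → Bool) |
          xz.1 i = x i ∧ (∀ k, k < i → maskedSeq xz k = some (x k)) ∧
          (∀ k, i ≤ k → maskedSeq xz k = none)} = S ((i : ℕ) + 1) * C i := by
    intro i
    rw [maskedJoint_prFin_eq P q i (fun w => w i = x i ∧ ∀ k, k < i → w k = x k) _ (hmem_n i)]
    congr 1
    simp only [hSdef]
    refine Finset.sum_congr rfl fun w _ => ?_
    refine if_congr ?_ rfl rfl
    constructor
    · rintro ⟨h1, h2⟩ k hk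
      rcases Nat.lt_succ_iff_lt_or_eq.mp hk with hk' | hk'
      · exact h2 k (Fin.lt_def.mpr hk')
      · have : k = i := Fin.ext hk'
        rw [this]; exact h1
    · intro h
      exact ⟨h i (Nat.lt_succ_self _), fun k hk => h k (Nat.lt_succ_of_lt (Fin.lt_def.mp hk))⟩
  -- assemble
  have hterm : ∀ i : Fin n,
      prFin (maskedJoint P q)
          {xz : (Fin n → A) × (Fin n → Bool) |
            xz.1 i = x i ∧ (∀ k, k < i → maskedSeq xz k = some (x k)) ∧
            (∀ k, i ≤ k → maskedSeq xz k = none)} /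
        prFin (maskedJoint P q)
          {xz : (Fin n → A) × (Fin n → Bool) |
            (∀ k, k < i → maskedSeq xz k = some (x k)) ∧
            (∀ k, i ≤ k → maskedSeq xz k = none)} = S ((i : ℕ) + 1) / S (i : ℕ) := by
    intro i
    rw [hnum i, hden i, mul_div_mul_right _ _ (hCpos i).ne']
  have htel : ∀ m : ℕ, ∏ j ∈ Finset.range m, (S (j + 1) / S j) = S m / S 0 := by
    intro m
    induction m with
    | zero => simp [div_self (hSne 0)]
    | succ m ih =>
        rw [Finset.prod_range_succ, ih, div_mul_div_comm, mul_comm (S 0) (S m),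
          mul_div_mul_left _ _ (hSne m)]
  rw [Finset.prod_congr rfl fun i _ => hterm i,
    Fin.prod_univ_eq_prod_range (fun m => S (m + 1) / S m) n, htel n, hS0, hSn, div_one]
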